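/- A bounded linear operator T : X → Y between Banach spaces is strictly singular if and only if every infinite-dimensional closed subspace Z of X contains a further infinite-dimensional closed subspace Z′ on which the restriction of T is compact. -/

import Mathlib

open Metric

/-- A bounded operator `T : X → Y` is strictly singular if it is not bounded below on any
infinite-dimensional closed subspace of `X`. -/
def StrictlySingular {X Y : Type*} [NormedAddCommGroup X] [NormedSpace ℝ X]
    [NormedAddCommGroup Y] [NormedSpace ℝ Y] (T : X →L[ℝ] Y) : Prop :=
  ∀ Z : Submodule ℝ X, IsClosed (Z : Set X) → ¬ FiniteDimensional ℝ Z →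
    ¬ ∃ c : ℝ, 0 < c ∧ ∀ z ∈ Z, c * ‖z‖ ≤ ‖T z‖

section Helpers

variable {X : Type*} [NormedAddCommGroup X] [NormedSpace ℝ X]


theorem infdim_inf_ker' (Z : Submodule ℝ X) (hZ : ¬ FiniteDimensional ℝ Z)
    (f : X →L[ℝ] ℝ) : ¬ FiniteDimensional ℝ ↥(Z ⊓ LinearMap.ker (f : X →ₗ[ℝ] ℝ)) := by
  intro hfin
  apply hZ
  set g : Z →ₗ[ℝ] ℝ := (f : X →ₗ[ℝ] ℝ).comp Z.subtype with hg
  have hker : LinearMap.ker g = Submodule.comap Z.subtype (Z ⊓ LinearMap.ker (f : X →ₗ[ℝ] ℝ)) := by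
    rw [Submodule.comap_inf]
    ext x
    simp [g, LinearMap.mem_ker, Submodule.mem_comap, x.2]
  have hfin' : FiniteDimensional ℝ (LinearMap.ker g) := by
    rw [hker]
    exact Module.Finite.equiv (Submodule.comapSubtypeEquivOfLe inf_le_left).symm
  -- ker g has finite codimension ≤ 1 in Z
  by_cases h : ∃ v : Z, g v ≠ 0
  · obtain ⟨v, hv⟩ := h
    have htop : LinearMap.ker g ⊔ Submodule.span ℝ {v} = ⊤ := by
      rw [eq_top_iff]
      intro z _
      have : z - (g z / g v) • v ∈ LinearMap.ker g := by
        simp [LinearMap.mem_ker, map_sub, map_smul, div_mul_cancel₀, hv]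
      have hmem : z = (z - (g z / g v) • v) + (g z / g v) • v := by ring_nf; abel
      rw [hmem]
      exact Submodule.add_mem _ (Submodule.mem_sup_left this)
        (Submodule.mem_sup_right (Submodule.smul_mem _ _ (Submodule.mem_span_singleton_self v)))
    have : FiniteDimensional ℝ ↥(LinearMap.ker g ⊔ Submodule.span ℝ {v}) := by
      infer_instance
    rw [htop] at this
    exact (Submodule.topEquiv).finiteDimensional
  · push_neg at h
    have htop : LinearMap.ker g = ⊤ := by
      rw [eq_top_iff]; intro z _; exact h z
    rw [htop] at hfin'
    exact (Submodule.topEquiv).finiteDimensional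



theorem ker_clm_coe (f : X →L[ℝ] ℝ) :
    LinearMap.ker (f : X →ₗ[ℝ] ℝ) = LinearMap.ker (f : X →ₗ[ℝ] ℝ) := by
  ext x; simp [LinearMap.mem_ker]

theorem finsetInf_ker_closed (t : Finset X) (g : X → (X →L[ℝ] ℝ)) :
    IsClosed (((t.inf fun y => LinearMap.ker (g y : X →ₗ[ℝ] ℝ) : Submodule ℝ X)) : Set X) := by
  classical
  induction t using Finset.induction with
  | empty => simp
  | @insert a s ha ih =>
    rw [Finset.inf_insert, Submodule.coe_inf]
    exact IsClosed.inter (ContinuousLinearMap.isClosed_ker (g a)) ih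

theorem finsetInf_ker_infdim (t : Finset X) (g : X → (X →L[ℝ] ℝ)) (Z : Submodule ℝ X)
    (hZ : ¬ FiniteDimensional ℝ Z) :
    ¬ FiniteDimensional ℝ ↥(Z ⊓ t.inf fun y => LinearMap.ker (g y : X →ₗ[ℝ] ℝ)) := by
  classical
  induction t using Finset.induction with
  | empty => rw [Finset.inf_empty, inf_top_eq]; exact hZ
  | @insert a s ha ih =>
    rw [Finset.inf_insert]
    have heq : Z ⊓ (LinearMap.ker (g a : X →ₗ[ℝ] ℝ) ⊓ s.inf fun y => LinearMap.ker (g y : X →ₗ[ℝ] ℝ))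
        = (Z ⊓ s.inf fun y => LinearMap.ker (g y : X →ₗ[ℝ] ℝ)) ⊓ LinearMap.ker (g a : X →ₗ[ℝ] ℝ) := by
      rw [inf_left_comm, inf_comm]
    rw [heq]
    have := infdim_inf_ker' _ ih (g a)
    rwa [ker_clm_coe] at this

theorem exists_norming' (F : Submodule ℝ X) (hF : FiniteDimensional ℝ F) :
    ∃ W : Submodule ℝ X, IsClosed (W : Set X) ∧
      (∀ Z : Submodule ℝ X, ¬ FiniteDimensional ℝ Z → ¬ FiniteDimensional ℝ ↥(Z ⊓ W)) ∧
      (∀ a ∈ F, ∀ w ∈ W, ‖a‖ ≤ 2 * ‖a + w‖) := by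
  classical
  set S : Set X := Subtype.val '' (Metric.sphere (0 : F) 1) with hS
  have hScompact : IsCompact S := by
    have : ProperSpace F := by infer_instance
    exact (isCompact_sphere (0:F) 1).image continuous_subtype_val
  have hSnorm : ∀ y ∈ S, ‖y‖ = 1 := by
    rintro y ⟨u, hu, rfl⟩
    simpa [Submodule.coe_norm] using mem_sphere_zero_iff_norm.1 hu
  obtain ⟨t, htS, hcover⟩ := hScompact.elim_nhds_subcover (fun y => Metric.ball y (4⁻¹))
    (fun x _ => Metric.ball_mem_nhds x (by norm_num))
  set g : X → (X →L[ℝ] ℝ) := fun y => if h : y ≠ 0 then (exists_dual_vector ℝ y (norm_ne_zero_iff.2 h)).choose else 0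
    with hg
  have hgspec : ∀ y ∈ S, ‖g y‖ = 1 ∧ g y y = ‖y‖ := by
    intro y hy
    have hy0 : y ≠ 0 := by
      intro h; rw [h] at hy; have := hSnorm 0 hy; simp at this
    simp only [hg, dif_pos hy0]
    exact (exists_dual_vector ℝ y (norm_ne_zero_iff.2 hy0)).choose_spec
  set W : Submodule ℝ X := t.inf (fun y => LinearMap.ker (g y : X →ₗ[ℝ] ℝ)) with hW
  have hWmem : ∀ x, x ∈ W ↔ ∀ y ∈ t, g y x = 0 := by
    intro x
    rw [hW, Submodule.mem_finsetInf]
    simp [LinearMap.mem_ker]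
  refine ⟨W, ?_, ?_, ?_⟩
  · exact finsetInf_ker_closed t g
  · intro Z hZ
    exact finsetInf_ker_infdim t g Z hZ
  · -- norming
    intro a haF w hwW
    rcases eq_or_ne a 0 with rfl | ha0
    · simp
    have hna : 0 < ‖a‖ := norm_pos_iff.2 ha0
    set u : X := ‖a‖⁻¹ • a with hu
    have huS : u ∈ S := by
      refine ⟨⟨u, F.smul_mem _ haF⟩, ?_, rfl⟩
      rw [mem_sphere_zero_iff_norm]
      simp only [Submodule.coe_norm]
      rw [hu, norm_smul]
      simp [abs_of_nonneg (inv_nonneg.2 hna.le), inv_mul_cancel₀ hna.ne']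
    obtain ⟨y, hyt, hyball⟩ := Set.mem_iUnion₂.1 (hcover huS)
    have hyS : y ∈ S := htS y hyt
    obtain ⟨hgy1, hgyy⟩ := hgspec y hyS
    have hyn : ‖y‖ = 1 := hSnorm y hyS
    set w' : X := ‖a‖⁻¹ • w with hw'
    have hw'W : w' ∈ W := W.smul_mem _ hwW
    have hgw' : g y w' = 0 := (hWmem w').1 hw'W y hyt
    have key : (1:ℝ)/2 ≤ ‖u + w'‖ := by
      have h1 : g y (u + w') = 1 + g y (u - y) := by
        have : u + w' = y + (u - y) + w' := by abel
        rw [this]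
        simp [map_add, hgw', hgyy, hyn]
      have h2 : |g y (u - y)| ≤ ‖u - y‖ := by
        calc |g y (u - y)| = ‖g y (u - y)‖ := (Real.norm_eq_abs _).symm
        _ ≤ ‖g y‖ * ‖u - y‖ := (g y).le_opNorm _
        _ = ‖u - y‖ := by rw [hgy1, one_mul]
      have h3 : ‖u - y‖ < 4⁻¹ := by
        have := Metric.mem_ball.1 hyball
        rwa [dist_eq_norm] at this
      have h4 : (3:ℝ)/4 ≤ g y (u + w') := by
        rw [h1]
        have : -(4⁻¹:ℝ) < g y (u - y) := by
          have := (abs_lt.1 (lt_of_le_of_lt h2 h3)).1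
          linarith
        linarith
      calc (1:ℝ)/2 ≤ g y (u + w') := by linarith
      _ ≤ |g y (u + w')| := le_abs_self _
      _ = ‖g y (u + w')‖ := (Real.norm_eq_abs _).symm
      _ ≤ ‖g y‖ * ‖u + w'‖ := (g y).le_opNorm _
      _ = ‖u + w'‖ := by rw [hgy1, one_mul]
    have : ‖a + w‖ = ‖a‖ * ‖u + w'‖ := by
      rw [hu, hw', ← smul_add, norm_smul]
      · rw [Real.norm_eq_abs, abs_of_nonneg (inv_nonneg.2 hna.le)]
        field_simp
    rw [this]
    calc ‖a‖ = 2 * (‖a‖ * (1/2)) := by ring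
    _ ≤ 2 * (‖a‖ * ‖u + w'‖) := by
        apply mul_le_mul_of_nonneg_left _ (by norm_num)
        exact mul_le_mul_of_nonneg_left key hna.le

variable {Y : Type*} [NormedAddCommGroup Y] [NormedSpace ℝ Y]


theorem findim_of_compact_bddBelow [CompleteSpace X] (Z' : Submodule ℝ X)
    (hc : IsClosed (Z' : Set X))
    (T : X →L[ℝ] Y) (c : ℝ) (hcpos : 0 < c)
    (hbd : ∀ z ∈ Z', c * ‖z‖ ≤ ‖T z‖)
    (hcomp : IsCompactOperator (fun z : Z' => T (z : X))) :
    FiniteDimensional ℝ Z' := by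
  have hcs : CompleteSpace Z' := hc.completeSpace_coe
  obtain ⟨K, hK, hKmem⟩ := hcomp
  obtain ⟨r, hr, hball⟩ := Metric.mem_nhds_iff.1 hKmem
  have htb : TotallyBounded (Metric.closedBall (0 : Z') (r/2)) := by
    rw [Metric.totallyBounded_iff]
    intro ε hε
    have hKtb : TotallyBounded K := hK.totallyBounded
    rw [Metric.totallyBounded_iff] at hKtb
    obtain ⟨t, ht, hcover⟩ := hKtb (c * ε / 2) (by positivity)
    classical
    set P : Y → Prop := fun y =>
      ∃ z : Z', z ∈ Metric.closedBall (0:Z') (r/2) ∧ T (z:X) ∈ Metric.ball y (c*ε/2) with hP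
    set u : Y → Z' := fun y => if h : P y then h.choose else 0 with hu
    refine ⟨(fun y => (u y : Z')) '' t, ht.image _, ?_⟩
    intro z hz
    have hzK : T (z : X) ∈ K := by
      apply hball
      have : ‖(z : X)‖ ≤ r / 2 := by
        simpa [Submodule.coe_norm] using mem_closedBall_zero_iff.1 hz
      exact mem_ball_zero_iff.2 (lt_of_le_of_lt this (by linarith))
    obtain ⟨y, hyt, hy⟩ := Set.mem_iUnion₂.1 (hcover hzK)
    have hPy : P y := ⟨z, hz, hy⟩
    have hspec := hPy.choose_spec
    refine Set.mem_iUnion₂.2 ⟨u y, Set.mem_image_of_mem _ hyt, ?_⟩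
    have huy : u y = hPy.choose := by simp [hu, hPy]
    have h1 : T ((u y : Z') : X) ∈ Metric.ball y (c*ε/2) := by rw [huy]; exact hspec.2
    -- combine: ‖T z - T (u y)‖ < c ε, so ‖z - u y‖ < ε
    have hdist : dist (T (z:X)) (T ((u y : Z'):X)) < c * ε := by
      calc dist (T (z:X)) (T ((u y:Z'):X)) ≤ dist (T (z:X)) y + dist y (T ((u y:Z'):X)) :=
        dist_triangle _ _ _
      _ < c*ε/2 + c*ε/2 := by
          exact add_lt_add (mem_ball.1 hy) (by rw [dist_comm]; exact mem_ball.1 h1)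
      _ = c*ε := by ring
    have hsub : ((z : X) - ((u y : Z') : X)) ∈ Z' := by
      exact Z'.sub_mem z.2 (u y).2
    have := hbd _ hsub
    rw [map_sub] at this
    have hlt : c * ‖(z:X) - ((u y : Z'):X)‖ < c * ε := by
      refine lt_of_le_of_lt this ?_
      simpa [dist_eq_norm] using hdist
    have : ‖(z:X) - ((u y:Z'):X)‖ < ε := lt_of_mul_lt_mul_left hlt hcpos.le
    rw [mem_ball]
    rw [Subtype.dist_eq]
    simpa [dist_eq_norm] using this
  have hcomp' : IsCompact (Metric.closedBall (0 : Z') (r/2)) :=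
    htb.isCompact_of_isClosed Metric.isClosed_closedBall
  exact FiniteDimensional.of_isCompact_closedBall₀ ℝ (by linarith) hcomp'



variable {X Y : Type*} [NormedAddCommGroup X] [NormedSpace ℝ X]
  [NormedAddCommGroup Y] [NormedSpace ℝ Y]


section
variable (T : X →L[ℝ] Y) (Z : Submodule ℝ X)

def GoodPair (s : Submodule ℝ X × Submodule ℝ X) : Prop :=
  FiniteDimensional ℝ s.1 ∧ IsClosed ((Z ⊓ s.2 : Submodule ℝ X) : Set X) ∧
  ¬ FiniteDimensional ℝ ↥(Z ⊓ s.2) ∧ ∀ a ∈ s.1, ∀ w ∈ s.2, ‖a‖ ≤ 2 * ‖a + w‖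

variable {T Z}

theorem step_exists (hT : StrictlySingular T)
    {s : Submodule ℝ X × Submodule ℝ X} (hs : GoodPair Z s) {c : ℝ} (hc : 0 < c) :
    ∃ z : X, ∃ W' : Submodule ℝ X, z ∈ Z ∧ z ∈ s.2 ∧ ‖z‖ = 1 ∧ ‖T z‖ ≤ c ∧ W' ≤ s.2 ∧
      GoodPair Z (s.1 ⊔ Submodule.span ℝ {z}, W') := by
  obtain ⟨hF, hclosed, hinf, hnorm⟩ := hs
  have hnb := hT (Z ⊓ s.2) hclosed hinf
  push_neg at hnb
  obtain ⟨z₀, hz₀mem, hz₀⟩ := hnb c hc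
  have hz0 : z₀ ≠ 0 := by
    rintro rfl
    simp at hz₀
  have hn : 0 < ‖z₀‖ := norm_pos_iff.2 hz0
  set z : X := ‖z₀‖⁻¹ • z₀ with hzdef
  have hzZ : z ∈ Z := Z.smul_mem _ (hz₀mem.1)
  have hzW : z ∈ s.2 := s.2.smul_mem _ (hz₀mem.2)
  have hz1 : ‖z‖ = 1 := by
    rw [hzdef, norm_smul, norm_inv, norm_norm, inv_mul_cancel₀ hn.ne']
  have hTz : ‖T z‖ ≤ c := by
    rw [hzdef, map_smul, norm_smul, norm_inv, norm_norm]
    rw [inv_mul_le_iff₀ hn, mul_comm]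
    exact hz₀.le
  set F' : Submodule ℝ X := s.1 ⊔ Submodule.span ℝ {z} with hF'
  have hF'fin : FiniteDimensional ℝ F' := by
    have := hF
    infer_instance
  obtain ⟨W₀, hW₀c, hW₀inf, hW₀norm⟩ := exists_norming' F' hF'fin
  refine ⟨z, s.2 ⊓ W₀, hzZ, hzW, hz1, hTz, inf_le_left, hF'fin, ?_, ?_, ?_⟩
  · have : Z ⊓ (s.2 ⊓ W₀) = (Z ⊓ s.2) ⊓ W₀ := by rw [inf_assoc]
    rw [this, Submodule.coe_inf]
    exact hclosed.inter hW₀c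
  · have : Z ⊓ (s.2 ⊓ W₀) = (Z ⊓ s.2) ⊓ W₀ := by rw [inf_assoc]
    rw [this]
    exact hW₀inf _ hinf
  · intro a ha w hw
    exact hW₀norm a ha w (Submodule.mem_inf.1 hw).2

variable (T Z)

noncomputable def nextState (hT : StrictlySingular T) (p : {s // GoodPair Z s})
    {c : ℝ} (hc : 0 < c) : X × {s // GoodPair Z s} :=
  let h := step_exists (T := T) hT p.2 hc
  ⟨h.choose, ⟨(p.1.1 ⊔ Submodule.span ℝ {h.choose}, h.choose_spec.choose),
    h.choose_spec.choose_spec.2.2.2.2.2⟩⟩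

theorem nextState_spec (hT : StrictlySingular T) (p : {s // GoodPair Z s})
    {c : ℝ} (hc : 0 < c) :
    (nextState T Z hT p hc).1 ∈ Z ∧ (nextState T Z hT p hc).1 ∈ p.1.2 ∧
    ‖(nextState T Z hT p hc).1‖ = 1 ∧ ‖T (nextState T Z hT p hc).1‖ ≤ c ∧
    (nextState T Z hT p hc).2.1.2 ≤ p.1.2 ∧
    (nextState T Z hT p hc).2.1.1 = p.1.1 ⊔ Submodule.span ℝ {(nextState T Z hT p hc).1} := by
  let h := step_exists (T := T) hT p.2 hc
  exact ⟨h.choose_spec.choose_spec.1, h.choose_spec.choose_spec.2.1,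
    h.choose_spec.choose_spec.2.2.1, h.choose_spec.choose_spec.2.2.2.1,
    h.choose_spec.choose_spec.2.2.2.2.1, rfl⟩

noncomputable def chain (hT : StrictlySingular T) (hZc : IsClosed (Z : Set X))
    (hZinf : ¬ FiniteDimensional ℝ Z) : ℕ → {s // GoodPair Z s}
  | 0 => ⟨(⊥, ⊤), by
      refine ⟨inferInstance, by simpa using hZc, by rw [inf_top_eq]; exact hZinf, ?_⟩
      intro a ha w hw
      simp only [Submodule.mem_bot] at ha
      subst ha
      simp⟩
  | (n+1) => (nextState T Z hT (chain hT hZc hZinf n)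
      (c := (2:ℝ)⁻¹ ^ (n+1)) (by positivity)).2

noncomputable def zseq (hT : StrictlySingular T) (hZc : IsClosed (Z : Set X))
    (hZinf : ¬ FiniteDimensional ℝ Z) (n : ℕ) : X :=
  (nextState T Z hT (chain T Z hT hZc hZinf n) (c := (2:ℝ)⁻¹ ^ (n+1)) (by positivity)).1

theorem chain_succ (hT : StrictlySingular T) (hZc : IsClosed (Z : Set X))
    (hZinf : ¬ FiniteDimensional ℝ Z) (n : ℕ) :
    chain T Z hT hZc hZinf (n+1) =
      (nextState T Z hT (chain T Z hT hZc hZinf n) (c := (2:ℝ)⁻¹ ^ (n+1)) (by positivity)).2 := rfl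


end

theorem geom_tail (n : ℕ) (t : Finset ℕ) (ht : ∀ i ∈ t, n ≤ i) :
    ∑ i ∈ t, ((2:ℝ)⁻¹)^(i+1) ≤ (2⁻¹)^n := by
  set m : ℕ := max n (t.sup id + 1) with hm
  have hsub : t ⊆ Finset.Ico n m := by
    intro i hi
    rw [Finset.mem_Ico]
    exact ⟨ht i hi, lt_of_le_of_lt (Finset.le_sup (f := id) hi)
      (lt_of_lt_of_le (Nat.lt_succ_self _) (le_max_right _ _))⟩
  have h1 : ∑ i ∈ t, ((2:ℝ)⁻¹)^(i+1) ≤ ∑ i ∈ Finset.Ico n m, ((2:ℝ)⁻¹)^(i+1) :=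
    Finset.sum_le_sum_of_subset_of_nonneg hsub (fun i _ _ => by positivity)
  refine le_trans h1 ?_
  have hnm : n ≤ m := le_max_left _ _
  have h2 : ∑ i ∈ Finset.Ico n m, ((2:ℝ)⁻¹)^(i+1)
      = (∑ i ∈ Finset.Ico n m, ((2:ℝ)⁻¹)^i) * 2⁻¹ := by
    rw [Finset.sum_mul]
    exact Finset.sum_congr rfl fun i _ => (pow_succ _ _)
  rw [h2, geom_sum_Ico (by norm_num) hnm]
  have h3 : (0:ℝ) ≤ (2⁻¹:ℝ)^m := by positivity
  have h4 : (0:ℝ) ≤ (2⁻¹:ℝ)^n := by positivity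
  have h5 : ((2⁻¹:ℝ)^m - (2⁻¹)^n)/((2⁻¹:ℝ) - 1) * 2⁻¹ = (2⁻¹)^n - (2⁻¹)^m := by
    norm_num
    ring
  rw [h5]
  linarith

section
variable {X Y : Type*} [NormedAddCommGroup X] [NormedSpace ℝ X]
  [NormedAddCommGroup Y] [NormedSpace ℝ Y] [CompleteSpace Y]
variable {T : X →L[ℝ] Y} {Z : Submodule ℝ X}

theorem forward_direction (hT : StrictlySingular T) (hZc : IsClosed (Z : Set X))
    (hZinf : ¬ FiniteDimensional ℝ Z) :
    ∃ Z' : Submodule ℝ X, Z' ≤ Z ∧ IsClosed (Z' : Set X) ∧ ¬ FiniteDimensional ℝ Z' ∧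
      IsCompactOperator (fun z : Z' => T (z : X)) := by
  classical
  set ζ : ℕ → X := zseq T Z hT hZc hZinf with hζ
  set F : ℕ → Submodule ℝ X := fun n => (chain T Z hT hZc hZinf n).1.1 with hF
  set W : ℕ → Submodule ℝ X := fun n => (chain T Z hT hZc hZinf n).1.2 with hW
  have spec : ∀ n, ζ n ∈ Z ∧ ζ n ∈ W n ∧ ‖ζ n‖ = 1 ∧ ‖T (ζ n)‖ ≤ (2:ℝ)⁻¹^(n+1) ∧
      W (n+1) ≤ W n ∧ F (n+1) = F n ⊔ Submodule.span ℝ {ζ n} := by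
    intro n
    have h := nextState_spec T Z hT (chain T Z hT hZc hZinf n)
      (c := (2:ℝ)⁻¹ ^ (n+1)) (by positivity)
    exact ⟨h.1, h.2.1, h.2.2.1, h.2.2.2.1, h.2.2.2.2.1, h.2.2.2.2.2⟩
  have hζZ : ∀ n, ζ n ∈ Z := fun n => (spec n).1
  have hζ1 : ∀ n, ‖ζ n‖ = 1 := fun n => (spec n).2.2.1
  have hζT : ∀ n, ‖T (ζ n)‖ ≤ (2:ℝ)⁻¹^(n+1) := fun n => (spec n).2.2.2.1
  have hWmono : ∀ n k, n ≤ k → W k ≤ W n := by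
    intro n k hnk
    induction k, hnk using Nat.le_induction with
    | base => exact le_refl _
    | succ k hnk ih => exact le_trans (spec k).2.2.2.2.1 ih
  have hζW : ∀ n k, n ≤ k → ζ k ∈ W n := fun n k hnk => hWmono n k hnk (spec k).2.1
  have hFmono : ∀ n k, n ≤ k → F n ≤ F k := by
    intro n k hnk
    induction k, hnk using Nat.le_induction with
    | base => exact le_refl _
    | succ k hnk ih =>
      refine le_trans ih ?_
      rw [(spec k).2.2.2.2.2]
      exact le_sup_left
  have hζF : ∀ n i, i < n → ζ i ∈ F n := by
    intro n i hin
    have h1 : ζ i ∈ F (i+1) := by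
      rw [(spec i).2.2.2.2.2]
      exact Submodule.mem_sup_right (Submodule.mem_span_singleton_self _)
    exact hFmono (i+1) n hin h1
  have hnorming : ∀ n, ∀ a ∈ F n, ∀ w ∈ W n, ‖a‖ ≤ 2 * ‖a + w‖ :=
    fun n => (chain T Z hT hZc hZinf n).2.2.2.2
  set V : Submodule ℝ X := Submodule.span ℝ (Set.range ζ) with hV
  set Z' : Submodule ℝ X := V.topologicalClosure with hZ'
  have hVZ' : V ≤ Z' := Submodule.le_topologicalClosure V
  set head : (ℕ →₀ ℝ) → ℕ → X :=
    fun c n => ∑ i ∈ c.support.filter (· < n), c i • ζ i with hhead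
  set vv : (ℕ →₀ ℝ) → X := fun c => c.sum fun i r => r • ζ i with hvv
  have hsplit : ∀ (c : ℕ →₀ ℝ) (n : ℕ),
      vv c = head c n + ∑ i ∈ c.support.filter (fun i => ¬ i < n), c i • ζ i := by
    intro c n
    rw [hvv, hhead]
    simp only [Finsupp.sum]
    exact (Finset.sum_filter_add_sum_filter_not _ _ _).symm
  have hheadF : ∀ (c : ℕ →₀ ℝ) (n : ℕ), head c n ∈ F n := by
    intro c n
    refine Submodule.sum_mem _ ?_
    intro i hi
    exact Submodule.smul_mem _ _ (hζF n i (Finset.mem_filter.1 hi).2)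
  have htailW : ∀ (c : ℕ →₀ ℝ) (n : ℕ),
      (∑ i ∈ c.support.filter (fun i => ¬ i < n), c i • ζ i) ∈ W n := by
    intro c n
    refine Submodule.sum_mem _ ?_
    intro i hi
    exact Submodule.smul_mem _ _ (hζW n i (not_lt.1 (Finset.mem_filter.1 hi).2))
  have hheadBound : ∀ (c : ℕ →₀ ℝ) (n : ℕ), ‖head c n‖ ≤ 2 * ‖vv c‖ := by
    intro c n
    have := hnorming n (head c n) (hheadF c n) _ (htailW c n)
    rwa [← hsplit c n] at this
  have hstep : ∀ (c : ℕ →₀ ℝ) (n : ℕ), head c (n+1) - head c n = c n • ζ n := by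
    intro c n
    have hfe : c.support.filter (· < n+1)
        = c.support.filter (· < n) ∪ c.support.filter (· = n) := by
      rw [← Finset.filter_or]
      exact Finset.filter_congr fun i _ => by
        simp [Nat.lt_succ_iff_lt_or_eq, Nat.le_iff_lt_or_eq]
    have hdisj : Disjoint (c.support.filter (· < n)) (c.support.filter (· = n)) := by
      rw [Finset.disjoint_left]
      intro i hi1 hi2
      have h1 := (Finset.mem_filter.1 hi1).2
      have h2 := (Finset.mem_filter.1 hi2).2
      subst h2
      exact lt_irrefl _ h1
    have hsingle : ∑ i ∈ c.support.filter (· = n), c i • ζ i = c n • ζ n := by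
      by_cases h : n ∈ c.support
      · rw [Finset.filter_eq', if_pos h, Finset.sum_singleton]
      · rw [Finset.filter_eq', if_neg h, Finset.sum_empty]
        rw [Finsupp.notMem_support_iff.1 h, zero_smul]
    show (∑ i ∈ c.support.filter (· < n+1), c i • ζ i)
        - (∑ i ∈ c.support.filter (· < n), c i • ζ i) = c n • ζ n
    rw [hfe, Finset.sum_union hdisj, add_sub_cancel_left, hsingle]
  have hcoeff : ∀ (c : ℕ →₀ ℝ) (n : ℕ), |c n| ≤ 4 * ‖vv c‖ := by
    intro c n
    have h1 : |c n| = ‖c n • ζ n‖ := by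
      rw [norm_smul, hζ1 n, mul_one, Real.norm_eq_abs]
    rw [h1, ← hstep c n]
    calc ‖head c (n+1) - head c n‖ ≤ ‖head c (n+1)‖ + ‖head c n‖ := norm_sub_le _ _
    _ ≤ 2 * ‖vv c‖ + 2 * ‖vv c‖ := add_le_add (hheadBound c (n+1)) (hheadBound c n)
    _ = 4 * ‖vv c‖ := by ring
  have hindep : LinearIndependent ℝ ζ := by
    rw [linearIndependent_iff]
    intro c hc
    have hv0 : vv c = 0 := by
      rw [hvv]
      simpa [Finsupp.linearCombination_apply] using hc
    ext n
    have := hcoeff c n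
    rw [hv0, norm_zero] at this
    simpa using abs_nonpos_iff.1 (by linarith)
  have htail : ∀ (c : ℕ →₀ ℝ) (n : ℕ),
      ‖T (vv c) - T (head c n)‖ ≤ 4 * ‖vv c‖ * (2⁻¹)^n := by
    intro c n
    have h1 : T (vv c) - T (head c n)
        = ∑ i ∈ c.support.filter (fun i => ¬ i < n), c i • T (ζ i) := by
      rw [← map_sub]
      rw [hsplit c n]
      simp only [add_sub_cancel_left]
      rw [map_sum]
      exact Finset.sum_congr rfl fun i _ => by rw [map_smul]
    rw [h1]
    calc ‖∑ i ∈ c.support.filter (fun i => ¬ i < n), c i • T (ζ i)‖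
        ≤ ∑ i ∈ c.support.filter (fun i => ¬ i < n), ‖c i • T (ζ i)‖ := norm_sum_le _ _
    _ ≤ ∑ i ∈ c.support.filter (fun i => ¬ i < n), (4 * ‖vv c‖) * (2⁻¹)^(i+1) := by
        refine Finset.sum_le_sum fun i _ => ?_
        rw [norm_smul, Real.norm_eq_abs]
        exact mul_le_mul (hcoeff c i) (hζT i) (norm_nonneg _) (by positivity)
    _ = (4 * ‖vv c‖) * ∑ i ∈ c.support.filter (fun i => ¬ i < n), (2⁻¹:ℝ)^(i+1) := by
        rw [Finset.mul_sum]
    _ ≤ (4 * ‖vv c‖) * (2⁻¹)^n := by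
        refine mul_le_mul_of_nonneg_left ?_ (by positivity)
        exact geom_tail n _ fun i hi => not_lt.1 (Finset.mem_filter.1 hi).2
    _ = 4 * ‖vv c‖ * (2⁻¹)^n := by ring
  have hVZ : V ≤ Z := Submodule.span_le.2 (by rintro _ ⟨n, rfl⟩; exact hζZ n)
  have hZ'Z : Z' ≤ Z := Submodule.topologicalClosure_minimal V hVZ hZc
  have hZ'closed : IsClosed (Z' : Set X) := Submodule.isClosed_topologicalClosure V
  have hZ'inf : ¬ FiniteDimensional ℝ Z' := by
    intro hfin
    set ζ' : ℕ → Z' := fun n => ⟨ζ n, hVZ' (Submodule.subset_span (Set.mem_range_self n))⟩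
      with hζ'
    have hindep' : LinearIndependent ℝ ζ' := LinearIndependent.of_comp Z'.subtype hindep
    have h1 : LinearIndependent ℝ (fun i : Fin (Module.finrank ℝ Z' + 1) => ζ' (i : ℕ)) :=
      hindep'.comp _ (fun i j h => Fin.ext h)
    have h2 := h1.fintype_card_le_finrank
    simp only [Fintype.card_fin] at h2
    omega
  set B : Set Y := T '' ((V : Set X) ∩ Metric.closedBall 0 1) with hB
  have hBtb : TotallyBounded B := by
    rw [Metric.totallyBounded_iff]
    intro ε hε
    obtain ⟨n, hn⟩ := exists_pow_lt_of_lt_one (x := ε/8) (y := (2⁻¹:ℝ))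
      (by positivity) (by norm_num)
    have hFfin : FiniteDimensional ℝ (F n) := (chain T Z hT hZc hZinf n).2.1
    have hK₀ : IsCompact (Subtype.val '' (Metric.closedBall (0 : F n) 2)) :=
      (isCompact_closedBall (0 : F n) 2).image continuous_subtype_val
    have hC : IsCompact (T '' (Subtype.val '' (Metric.closedBall (0 : F n) 2))) :=
      hK₀.image T.continuous
    obtain ⟨t, ht, hcov⟩ := Metric.totallyBounded_iff.1 hC.totallyBounded (ε/2)
      (by positivity)
    refine ⟨t, ht, ?_⟩
    rintro _ ⟨x, ⟨hxV, hx1⟩, rfl⟩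
    obtain ⟨c, hc⟩ := Finsupp.mem_span_range_iff_exists_finsupp.1 hxV
    have hxeq : vv c = x := hc
    have hx1' : ‖vv c‖ ≤ 1 := by rw [hxeq]; exact mem_closedBall_zero_iff.1 hx1
    have hhn : ‖head c n‖ ≤ 2 := le_trans (hheadBound c n) (by linarith)
    have hmemC : T (head c n) ∈ T '' (Subtype.val '' (Metric.closedBall (0 : F n) 2)) := by
      refine ⟨head c n, ⟨⟨head c n, hheadF c n⟩, ?_, rfl⟩, rfl⟩
      rw [Metric.mem_closedBall, dist_zero_right]
      exact hhn
    obtain ⟨y, hyt, hy⟩ := Set.mem_iUnion₂.1 (hcov hmemC)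
    refine Set.mem_iUnion₂.2 ⟨y, hyt, ?_⟩
    rw [Metric.mem_ball]
    have hd1 : dist (T x) (T (head c n)) ≤ 4 * ‖vv c‖ * (2⁻¹)^n := by
      rw [dist_eq_norm, ← hxeq]
      exact htail c n
    have hd2 : dist (T (head c n)) y < ε/2 := Metric.mem_ball.1 hy
    have hpow : (4:ℝ) * ‖vv c‖ * (2⁻¹)^n ≤ ε/2 := by
      have h0 : (0:ℝ) ≤ (2⁻¹:ℝ)^n := by positivity
      have : (4:ℝ) * ‖vv c‖ * (2⁻¹)^n ≤ 4 * 1 * (2⁻¹)^n := by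
        apply mul_le_mul_of_nonneg_right _ h0
        nlinarith [norm_nonneg (vv c)]
      nlinarith
    calc dist (T x) y ≤ dist (T x) (T (head c n)) + dist (T (head c n)) y :=
      dist_triangle _ _ _
    _ < ε/2 + ε/2 := add_lt_add_of_le_of_lt (le_trans hd1 hpow) hd2
    _ = ε := by ring
  have hK : IsCompact (closure B) :=
    hBtb.closure.isCompact_of_isClosed isClosed_closure
  refine ⟨Z', hZ'Z, hZ'closed, hZ'inf, closure B, hK, ?_⟩
  have hsub : Metric.ball (0 : Z') 1 ⊆ (fun z : Z' => T (z : X)) ⁻¹' closure B := by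
    intro z hz
    have hz1 : ‖(z : X)‖ < 1 := by
      have := mem_ball_zero_iff.1 hz
      simpa [Submodule.coe_norm] using this
    have hzc : (z : X) ∈ closure (V : Set X) := by
      have h2 : (z : X) ∈ (V.topologicalClosure : Set X) := z.2
      rwa [Submodule.topologicalClosure_coe] at h2
    obtain ⟨u, hu, hulim⟩ := mem_closure_iff_seq_limit.1 hzc
    have hnormlim : Filter.Tendsto (fun m => ‖u m‖) Filter.atTop (nhds ‖(z:X)‖) :=
      (Filter.Tendsto.norm hulim)
    have hev : ∀ᶠ m in Filter.atTop, ‖u m‖ < 1 :=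
      hnormlim.eventually_lt_const hz1
    refine mem_closure_of_tendsto ((T.continuous.tendsto _).comp hulim) ?_
    filter_upwards [hev] with m hm
    exact ⟨u m, ⟨hu m, mem_closedBall_zero_iff.2 hm.le⟩, rfl⟩
  exact Filter.mem_of_superset (Metric.ball_mem_nhds 0 one_pos) hsub

end

end Helpers

/-- A bounded operator `T : X → Y` between Banach spaces is strictly singular if and only
if every infinite-dimensional closed subspace `Z ⊆ X` contains a further
infinite-dimensional closed subspace `Z'` on which the restriction of `T` is compact. -/
theorem strictlySingular_iff_compact_restriction {X Y : Type*} [NormedAddCommGroup X]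
    [NormedSpace ℝ X] [CompleteSpace X] [NormedAddCommGroup Y] [NormedSpace ℝ Y]
    [CompleteSpace Y] (T : X →L[ℝ] Y) :
    StrictlySingular T ↔
      ∀ Z : Submodule ℝ X, IsClosed (Z : Set X) → ¬ FiniteDimensional ℝ Z →
        ∃ Z' : Submodule ℝ X, Z' ≤ Z ∧ IsClosed (Z' : Set X) ∧ ¬ FiniteDimensional ℝ Z' ∧
          IsCompactOperator (fun z : Z' => T (z : X)) := by
  constructor
  · intro hT Z hZc hZinf
    exact forward_direction hT hZc hZinf
  · intro h Z hZc hZinf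
    rintro ⟨c, hc, hbd⟩
    obtain ⟨Z', hZ'Z, hZ'c, hZ'inf, hcomp⟩ := h Z hZc hZinf
    exact hZ'inf (findim_of_compact_bddBelow Z' hZ'c T c hc
      (fun z hz => hbd z (hZ'Z hz)) hcomp)
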